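/- Let F : ℝ² → ℝ² be a lift of a positive conservative twist map and E ⊆ ℝ² a nonempty closed F-ordered set. Then the first projection π(θ,r) = θ restricted to E is injective, and π(E) is a closed subset of ℝ invariant under t ↦ t+1. -/

import Mathlib

/-- `E ⊆ ℝ²` is `F`-ordered: invariant by `F` and by all integer horizontal
translations, and the first projection order is preserved by `F` on `E`. -/
def FOrdered (F : ℝ × ℝ → ℝ × ℝ) (E : Set (ℝ × ℝ)) : Prop :=
  F '' E = E ∧ (∀ k : ℤ, (fun x : ℝ × ℝ => (x.1 + (k : ℝ), x.2)) '' E = E) ∧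
  ∀ x ∈ E, ∀ y ∈ E, x.1 < y.1 → (F x).1 < (F y).1

set_option maxHeartbeats 1000000 in
/-- For a lift `F` of a positive conservative twist map and a nonempty closed
`F`-ordered set `E`, the first projection is injective on `E`, and `π(E)` is a
closed subset of `ℝ` invariant under `t ↦ t + 1`. -/
theorem stmt4 (F Finv : ℝ × ℝ → ℝ × ℝ) (ε : ℝ) (hε : 0 < ε)
    (hF : ContDiff ℝ 1 F) (hFinv : Continuous Finv)
    (hl : Function.LeftInverse Finv F) (hr : Function.RightInverse Finv F)
    (hlift : ∀ θ r : ℝ, F (θ + 1, r) = ((F (θ, r)).1 + 1, (F (θ, r)).2))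
    (htwist : ∀ x : ℝ × ℝ, ε < deriv (fun r => (F (x.1, r)).1) x.2 ∧
      deriv (fun r => (F (x.1, r)).1) x.2 < 1 / ε)
    (E : Set (ℝ × ℝ)) (hne : E.Nonempty) (hcl : IsClosed E) (hord : FOrdered F E) :
    Set.InjOn (fun x : ℝ × ℝ => x.1) E ∧ IsClosed (Prod.fst '' E) ∧
      (fun t : ℝ => t + 1) '' (Prod.fst '' E) = Prod.fst '' E := by
  obtain ⟨hFE, htrans, hmono⟩ := hord
  -- differentiability of r ↦ (F (θ, r)).1
  have hdiff : ∀ θ : ℝ, Differentiable ℝ (fun r => (F (θ, r)).1) := by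
    intro θ
    have h1 : Differentiable ℝ F := hF.differentiable one_ne_zero
    exact (h1.comp ((differentiable_const θ).prodMk differentiable_id)).fst
  have hderiv_pos : ∀ θ r : ℝ, 0 < deriv (fun r => (F (θ, r)).1) r := by
    intro θ r
    have := (htwist (θ, r)).1
    linarith
  have gmono : ∀ θ : ℝ, StrictMono (fun r => (F (θ, r)).1) := fun θ =>
    strictMono_of_deriv_pos (hderiv_pos θ)
  -- injectivity
  have hinj : Set.InjOn (fun x : ℝ × ℝ => x.1) E := by
    intro x hx y hy hxy
    simp only at hxy
    obtain ⟨u, hu, hux⟩ : ∃ u ∈ E, F u = x := by rw [← hFE] at hx; exact hx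
    obtain ⟨v, hv, hvy⟩ : ∃ v ∈ E, F v = y := by rw [← hFE] at hy; exact hy
    have huv1 : u.1 = v.1 := by
      rcases lt_trichotomy u.1 v.1 with h | h | h
      · exfalso; have := hmono u hu v hv h; rw [hux, hvy] at this; linarith
      · exact h
      · exfalso; have := hmono v hv u hu h; rw [hux, hvy] at this; linarith
    have huv2 : u.2 = v.2 := by
      apply (gmono u.1).injective
      show (F (u.1, u.2)).1 = (F (u.1, v.2)).1
      have e1 : ((u.1 : ℝ), u.2) = u := Prod.mk.eta
      have e2 : ((u.1 : ℝ), v.2) = v := by rw [huv1]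
      rw [e1, e2, hux, hvy]
      exact hxy
    have huv : u = v := Prod.ext huv1 huv2
    rw [← hux, ← hvy, huv]
  -- lift formula for all integers (first component)
  have hliftk : ∀ (k : ℤ) (θ r : ℝ), (F (θ + k, r)).1 = (F (θ, r)).1 + k := by
    intro k
    induction k using Int.induction_on with
    | zero => intro θ r; simp
    | succ n ih =>
      intro θ r
      have h1 : (θ + ((n : ℤ) + 1 : ℤ) : ℝ) = (θ + (n : ℤ)) + 1 := by push_cast; ring
      rw [h1, hlift (θ + (n : ℤ)) r]
      simp only [ih θ r]
      push_cast; ring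
    | pred n ih =>
      intro θ r
      have h1 : (θ + (-(n : ℤ) - 1 : ℤ) : ℝ) + 1 = θ + (-(n : ℤ) : ℤ) := by push_cast; ring
      have h2 := hlift ((θ + (-(n : ℤ) - 1 : ℤ) : ℝ)) r
      rw [h1] at h2
      have h3 : (F (θ + (-(n : ℤ) : ℤ), r)).1 = (F (θ + (-(n : ℤ) - 1 : ℤ), r)).1 + 1 := by
        rw [h2]
      rw [ih θ r] at h3
      push_cast at h3 ⊢
      linarith
  -- bound on displacement of first coordinate on E
  obtain ⟨p, hp⟩ := hne
  have hDbound : ∀ x ∈ E, |(F x).1 - x.1| ≤ |(F p).1 - p.1| + 2 := by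
    intro x hx
    set k : ℤ := ⌊x.1 - p.1⌋ with hk
    have hk1 : (k : ℝ) ≤ x.1 - p.1 := Int.floor_le _
    have hk2 : x.1 - p.1 < k + 1 := Int.lt_floor_add_one _
    have hq1 : (p.1 + ((k - 1 : ℤ) : ℝ), p.2) ∈ E := by
      rw [← htrans (k - 1)]; exact ⟨p, hp, rfl⟩
    have hq2 : (p.1 + ((k + 1 : ℤ) : ℝ), p.2) ∈ E := by
      rw [← htrans (k + 1)]; exact ⟨p, hp, rfl⟩
    have h1 := hmono _ hq1 x hx (by push_cast; linarith)
    have h2 := hmono x hx _ hq2 (by push_cast; linarith)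
    have e1 : (F (p.1 + ((k - 1 : ℤ) : ℝ), p.2)).1 = (F p).1 + ((k : ℝ) - 1) := by
      have := hliftk (k - 1) p.1 p.2
      rw [Prod.mk.eta] at this
      push_cast at this ⊢
      linarith
    have e2 : (F (p.1 + ((k + 1 : ℤ) : ℝ), p.2)).1 = (F p).1 + ((k : ℝ) + 1) := by
      have := hliftk (k + 1) p.1 p.2
      rw [Prod.mk.eta] at this
      push_cast at this ⊢
      linarith
    rw [e1] at h1
    rw [e2] at h2
    rw [abs_le]
    constructor <;>
      [linarith [neg_abs_le ((F p).1 - p.1)]; linarith [le_abs_self ((F p).1 - p.1)]]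
  -- quantitative twist estimates
  have hmonoh : ∀ θ : ℝ, Monotone (fun r => (F (θ, r)).1 - ε * r) := by
    intro θ
    have hd : ∀ r : ℝ, 0 < deriv (fun r => (F (θ, r)).1 - ε * r) r := by
      intro r
      have hdm : DifferentiableAt ℝ (fun r : ℝ => ε * r) r := by fun_prop
      rw [deriv_fun_sub ((hdiff θ) r) hdm]
      have hε' : HasDerivAt (fun r : ℝ => ε * r) ε r := by
        simpa using (hasDerivAt_id r).const_mul ε
      rw [hε'.deriv]
      have h := (htwist (θ, r)).1
      linarith
    exact (strictMono_of_deriv_pos hd).monotone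
  have hmean : ∀ θ r : ℝ, 0 ≤ r → ε * r ≤ (F (θ, r)).1 - (F (θ, 0)).1 := by
    intro θ r hr
    have h : (F (θ, 0)).1 - ε * 0 ≤ (F (θ, r)).1 - ε * r := hmonoh θ hr
    linarith
  have hmean' : ∀ θ r : ℝ, r ≤ 0 → (F (θ, r)).1 - (F (θ, 0)).1 ≤ ε * r := by
    intro θ r hr
    have h : (F (θ, r)).1 - ε * r ≤ (F (θ, 0)).1 - ε * 0 := hmonoh θ hr
    linarith
  -- bound second coordinate on vertical strips
  have hstrip : ∀ t : ℝ, ∃ M : ℝ, ∀ x ∈ E, x.1 ∈ Set.Icc (t - 1) (t + 1) → |x.2| ≤ M := by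
    intro t
    set D : ℝ := |(F p).1 - p.1| + 2 with hD
    have hD0 : 0 ≤ D := by positivity
    have hcont : Continuous fun θ : ℝ => (F (θ, 0)).1 := by
      exact (hF.continuous.comp (continuous_id.prodMk continuous_const)).fst
    obtain ⟨B, hB⟩ := (isCompact_Icc (a := t - 1) (b := t + 1)).exists_bound_of_continuousOn
      hcont.continuousOn
    have hB0 : 0 ≤ B := le_trans (norm_nonneg _) (hB (t - 1) (by constructor <;> linarith))
    refine ⟨(|t| + 1 + D + B) / ε, ?_⟩
    rintro x hx ⟨hx1, hx2⟩
    have hFb := hDbound x hx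
    obtain ⟨hFb1, hFb2⟩ := abs_le.1 hFb
    have hBx := hB x.1 ⟨hx1, hx2⟩
    rw [Real.norm_eq_abs] at hBx
    obtain ⟨hBx1, hBx2⟩ := abs_le.1 hBx
    have he : F (x.1, x.2) = F x := by rw [Prod.mk.eta]
    have ht1 : x.1 ≤ |t| + 1 := by linarith [le_abs_self t]
    have ht2 : -(|t| + 1) ≤ x.1 := by linarith [neg_abs_le t]
    have key : ε * |x.2| ≤ |t| + 1 + D + B := by
      rcases le_or_gt 0 x.2 with hr | hr
      · rw [abs_of_nonneg hr]
        have h1 := hmean x.1 x.2 hr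
        rw [he] at h1
        linarith
      · rw [abs_of_neg hr]
        have h1 := hmean' x.1 x.2 hr.le
        rw [he] at h1
        linarith
    rw [le_div_iff₀ hε]
    linarith
  -- closedness of the projection
  have hclosed : IsClosed (Prod.fst '' E) := by
    apply IsSeqClosed.isClosed
    intro u t hu hlim
    choose x hxE hx1 using hu
    obtain ⟨M, hM⟩ := hstrip t
    have hev : ∀ᶠ n in Filter.atTop, u n ∈ Set.Icc (t - 1) (t + 1) :=
      hlim (Icc_mem_nhds (by linarith) (by linarith))
    obtain ⟨N, hN⟩ := Filter.eventually_atTop.1 hev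
    set y : ℕ → ℝ × ℝ := fun n => x (n + N) with hy
    have hyK : ∀ n, y n ∈ Set.Icc ((t - 1, -M) : ℝ × ℝ) (t + 1, M) := by
      intro n
      have h1 := Set.mem_Icc.1 (hN (n + N) (by omega))
      have h2 : |(x (n + N)).2| ≤ M := hM (x (n + N)) (hxE _)
        (by rw [hx1]; exact Set.mem_Icc.2 h1)
      obtain ⟨h2a, h2b⟩ := abs_le.1 h2
      simp only [hy, Set.mem_Icc, Prod.le_def]
      exact ⟨⟨by rw [hx1]; exact h1.1, h2a⟩, by rw [hx1]; exact h1.2, h2b⟩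
    have hcomp : IsCompact (Set.Icc ((t - 1, -M) : ℝ × ℝ) (t + 1, M)) := isCompact_Icc
    obtain ⟨a, haK, φ, hφ, hlim2⟩ := hcomp.tendsto_subseq hyK
    have haE : a ∈ E := hcl.mem_of_tendsto hlim2 (Filter.Eventually.of_forall fun n => hxE _)
    refine ⟨a, haE, ?_⟩
    have h1 : Filter.Tendsto (fun n => (y (φ n)).1) Filter.atTop (nhds a.1) :=
      (continuous_fst.tendsto a).comp hlim2
    have h2 : Filter.Tendsto (fun n => (y (φ n)).1) Filter.atTop (nhds t) := by
      have heq : (fun n => (y (φ n)).1) = fun n => u (φ n + N) := funext fun n => hx1 _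
      rw [heq]
      exact hlim.comp (Filter.tendsto_atTop_mono (fun n => Nat.le_add_right (φ n) N) hφ.tendsto_atTop)
    exact tendsto_nhds_unique h1 h2
  -- translation invariance
  have htr : (fun t : ℝ => t + 1) '' (Prod.fst '' E) = Prod.fst '' E := by
    rw [Set.image_image]
    conv_rhs => rw [← htrans 1]
    rw [Set.image_image]
    push_cast
    rfl
  exact ⟨hinj, hclosed, htr⟩
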